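/- For all integers a, b with b ≤ a ≤ 2b and b ≥ 1, there exists a graph G with n vertices and m edges such that m/n = a/b and ψ_3(G) ≥ (2n + m)/6; hence the bound ψ_3(G) ≤ (2n+m)/6 is tight for all such edge densities. -/

import Mathlib

open SimpleGraph

variable {V : Type*}

/-- `S` is a `k`-path vertex cover of `G`: every path on `k` vertices meets `S`. -/
def IsPathVC (G : SimpleGraph V) (k : ℕ) (S : Set V) : Prop :=
  ∀ ⦃u v : V⦄ (w : G.Walk u v), w.IsPath → w.length + 1 = k → ∃ x ∈ w.support, x ∈ S

/-- `psi G k` is the minimum cardinality of a `k`-path vertex cover of `G`. -/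
noncomputable def psi (G : SimpleGraph V) (k : ℕ) : ℕ :=
  sInf {n | ∃ S : Set V, IsPathVC G k S ∧ S.ncard = n}

section Aux

/-- disjoint union of x copies of C4 and y copies of K6 minus a perfect matching -/
def BG (x y : ℕ) : SimpleGraph ((Fin x × Fin 4) ⊕ (Fin y × Fin 6)) where
  Adj u v :=
    match u, v with
    | .inl (i, p), .inl (j, q) => i = j ∧ (p = q + 1 ∨ q = p + 1)
    | .inr (i, p), .inr (j, q) => i = j ∧ p ≠ q ∧ q ≠ p + 3 ∧ p ≠ q + 3
    | _, _ => False
  symm := by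
    constructor
    rintro (⟨i, p⟩ | ⟨i, p⟩) (⟨j, q⟩ | ⟨j, q⟩) h
    · exact ⟨h.1.symm, h.2.symm⟩
    · exact h.elim
    · exact h.elim
    · exact ⟨h.1.symm, h.2.1.symm, h.2.2.2, h.2.2.1⟩
  loopless := by
    constructor
    rintro (⟨i, p⟩ | ⟨i, p⟩) h
    · exact (by decide : ∀ p : Fin 4, ¬(p = p + 1 ∨ p = p + 1)) p h.2
    · exact h.2.1 rfl

instance (x y : ℕ) : DecidableRel (BG x y).Adj := fun u v =>
  match u, v with
  | .inl (i, p), .inl (j, q) => inferInstanceAs (Decidable (i = j ∧ (p = q + 1 ∨ q = p + 1)))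
  | .inl _, .inr _ => inferInstanceAs (Decidable False)
  | .inr _, .inl _ => inferInstanceAs (Decidable False)
  | .inr (i, p), .inr (j, q) =>
      inferInstanceAs (Decidable (i = j ∧ p ≠ q ∧ q ≠ p + 3 ∧ p ≠ q + 3))

lemma BG_adj_ll {x y : ℕ} {i j : Fin x} {p q : Fin 4} :
    (BG x y).Adj (.inl (i, p)) (.inl (j, q)) ↔ i = j ∧ (p = q + 1 ∨ q = p + 1) := Iff.rfl

lemma BG_adj_rr {x y : ℕ} {i j : Fin y} {p q : Fin 6} :
    (BG x y).Adj (.inr (i, p)) (.inr (j, q)) ↔ i = j ∧ p ≠ q ∧ q ≠ p + 3 ∧ p ≠ q + 3 := Iff.rfl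

lemma BG_adj_lr {x y : ℕ} {i : Fin x} {j : Fin y} {p : Fin 4} {q : Fin 6} :
    ¬ (BG x y).Adj (.inl (i, p)) (.inr (j, q)) := id

lemma BG_adj_rl {x y : ℕ} {i : Fin y} {j : Fin x} {p : Fin 6} {q : Fin 4} :
    ¬ (BG x y).Adj (.inr (i, p)) (.inl (j, q)) := id

lemma BG_deg_l {x y : ℕ} (i : Fin x) (p : Fin 4) :
    (BG x y).degree (.inl (i, p)) = 2 := by
  have hn : (BG x y).neighborFinset (.inl (i, p)) =
      {.inl (i, p + 1), .inl (i, p + 3)} := by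
    ext v
    rcases v with ⟨j, q⟩ | ⟨j, q⟩
    · simp only [SimpleGraph.mem_neighborFinset, BG_adj_ll, Finset.mem_insert,
        Finset.mem_singleton, Sum.inl.injEq, Prod.mk.injEq]
      constructor
      · rintro ⟨rfl, h | h⟩
        · exact Or.inr ⟨rfl, (by decide : ∀ p q : Fin 4, p = q + 1 → q = p + 3) _ _ h⟩
        · exact Or.inl ⟨rfl, h⟩
      · rintro (⟨rfl, rfl⟩ | ⟨rfl, rfl⟩)
        · exact ⟨rfl, Or.inr rfl⟩
        · exact ⟨rfl, Or.inl ((by decide : ∀ p : Fin 4, p = p + 3 + 1) p)⟩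
    · simp [SimpleGraph.mem_neighborFinset, BG_adj_lr]
  rw [SimpleGraph.degree, hn]
  rw [Finset.card_insert_of_notMem (by
    simp only [Finset.mem_singleton, Sum.inl.injEq, Prod.mk.injEq]
    rintro ⟨-, h⟩
    exact (by decide : ∀ p : Fin 4, p + 1 ≠ p + 3) p h), Finset.card_singleton]

lemma BG_deg_r {x y : ℕ} (j : Fin y) (p : Fin 6) :
    (BG x y).degree (.inr (j, p)) = 4 := by
  have hn : (BG x y).neighborFinset (.inr (j, p)) =
      {.inr (j, p + 1), .inr (j, p + 2), .inr (j, p + 4), .inr (j, p + 5)} := by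
    ext v
    rcases v with ⟨i, q⟩ | ⟨i, q⟩
    · simp only [SimpleGraph.mem_neighborFinset, Finset.mem_insert, Finset.mem_singleton]
      constructor
      · exact fun h => absurd h BG_adj_rl
      · rintro (h|h|h|h) <;> exact absurd h (by simp)
    · simp only [SimpleGraph.mem_neighborFinset, BG_adj_rr, Finset.mem_insert,
        Finset.mem_singleton, Sum.inr.injEq, Prod.mk.injEq]
      constructor
      · rintro ⟨rfl, h⟩
        have := (by decide : ∀ p q : Fin 6, (p ≠ q ∧ q ≠ p + 3 ∧ p ≠ q + 3) →
          (q = p + 1 ∨ q = p + 2 ∨ q = p + 4 ∨ q = p + 5)) _ _ h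
        tauto
      · rintro (⟨rfl, rfl⟩ | ⟨rfl, rfl⟩ | ⟨rfl, rfl⟩ | ⟨rfl, rfl⟩) <;>
          exact ⟨rfl, by revert p; decide⟩
  rw [SimpleGraph.degree, hn]
  have : ∀ p : Fin 6, p + 1 ≠ p + 2 ∧ p + 1 ≠ p + 4 ∧ p + 1 ≠ p + 5 ∧ p + 2 ≠ p + 4 ∧
      p + 2 ≠ p + 5 ∧ p + 4 ≠ p + 5 := by decide
  obtain ⟨h1, h2, h3, h4, h5, h6⟩ := this p
  rw [Finset.card_insert_of_notMem (by simp_all), Finset.card_insert_of_notMem (by simp_all),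
    Finset.card_insert_of_notMem (by simp_all), Finset.card_singleton]

lemma BG_edge_card (x y : ℕ) : (BG x y).edgeFinset.card = 4 * x + 12 * y := by
  have hs := SimpleGraph.sum_degrees_eq_twice_card_edges (BG x y)
  rw [Fintype.sum_sum_type] at hs
  have e1 : ∀ v : Fin x × Fin 4, (BG x y).degree (Sum.inl v) = 2 := fun ⟨i, p⟩ => BG_deg_l i p
  have e2 : ∀ v : Fin y × Fin 6, (BG x y).degree (Sum.inr v) = 4 := fun ⟨j, p⟩ => BG_deg_r j p
  simp only [e1, e2, Finset.sum_const, Finset.card_univ, Fintype.card_prod,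
    Fintype.card_fin, smul_eq_mul] at hs
  omega

lemma no_path_cover {W : Type*} {G : SimpleGraph W} {S : Set W} (hS : IsPathVC G 3 S)
    {u1 u2 u3 : W} (h12 : G.Adj u1 u2) (h23 : G.Adj u2 u3) (h13 : u1 ≠ u3)
    (n1 : u1 ∉ S) (n2 : u2 ∉ S) (n3 : u3 ∉ S) : False := by
  obtain ⟨z, hz, hzS⟩ := hS (Walk.cons h12 (Walk.cons h23 Walk.nil))
    (by rw [Walk.isPath_def]; simp [h12.ne, h23.ne, h13]) (by simp)
  simp only [Walk.support_cons, Walk.support_nil, List.mem_cons, List.mem_singleton,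
    List.not_mem_nil, or_false] at hz
  rcases hz with rfl | rfl | rfl <;> contradiction

lemma psi_lb {W : Type*} {G : SimpleGraph W} {L : ℕ}
    (h : ∀ S : Set W, IsPathVC G 3 S → L ≤ S.ncard) : L ≤ psi G 3 := by
  apply le_csInf
  · exact ⟨(Set.univ : Set W).ncard, Set.univ,
      fun u v w _ _ => ⟨u, w.start_mem_support, trivial⟩, rfl⟩
  · rintro n ⟨S, hS, rfl⟩
    exact h S hS

lemma psi_comap_lb {W W' : Type*} (e : W' ≃ W) (G : SimpleGraph W) {L : ℕ}
    (h : ∀ S : Set W, IsPathVC G 3 S → L ≤ S.ncard)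
    {S' : Set W'} (hS' : IsPathVC (G.comap e.toEmbedding) 3 S') : L ≤ S'.ncard := by
  have himg : IsPathVC G 3 (⇑e '' S') := by
    intro u v w hp hl
    let φ : G →g G.comap ⇑e.toEmbedding := (Iso.comap e G).symm.toHom
    have hφinj : Function.Injective ⇑φ := fun a b hab => e.symm.injective hab
    obtain ⟨z, hz, hzS⟩ := hS' (w.map φ) (Walk.map_isPath_of_injective hφinj hp)
      (by rw [Walk.length_map]; exact hl)
    rw [Walk.support_map, List.mem_map] at hz
    obtain ⟨z0, hz0, hz0e⟩ := hz
    refine ⟨z0, hz0, z, hzS, ?_⟩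
    rw [← hz0e]
    exact e.apply_symm_apply z0
  calc L ≤ (⇑e '' S').ncard := h _ himg
    _ = S'.ncard := Set.ncard_image_of_injective S' e.injective

lemma BG_cover_lb (x y : ℕ) {S : Set ((Fin x × Fin 4) ⊕ (Fin y × Fin 6))}
    (hS : IsPathVC (BG x y) 3 S) : 2 * x + 4 * y ≤ S.ncard := by
  classical
  have hfin : S.Finite := Set.toFinite S
  set T := hfin.toFinset with hTdef
  have hmemT : ∀ v, v ∈ T ↔ v ∈ S := fun v => hfin.mem_toFinset
  have hcard : S.ncard = T.card := Set.ncard_eq_toFinset_card S hfin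
  set β : (Fin x × Fin 4) ⊕ (Fin y × Fin 6) → Fin x ⊕ Fin y :=
    Sum.map Prod.fst Prod.fst with hβ
  have hfib := Finset.card_eq_sum_card_fiberwise
    (f := β) (s := T) (t := Finset.univ) (fun v _ => Finset.mem_univ _)
  have hC : ∀ i : Fin x, 2 ≤ (T.filter (fun v => β v = Sum.inl i)).card := by
    intro i
    by_contra hlt
    have h1 : (T.filter (fun v => β v = Sum.inl i)).card ≤ 1 := by omega
    obtain ⟨c, hc⟩ : ∃ c : Fin 4, ∀ p : Fin 4, Sum.inl (i, p) ∈ T → p = c := by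
      by_cases hex : ∃ p : Fin 4, (Sum.inl (i, p) : (Fin x × Fin 4) ⊕ (Fin y × Fin 6)) ∈ T
      · obtain ⟨c, hcT⟩ := hex
        refine ⟨c, fun p hp => ?_⟩
        have := Finset.card_le_one.mp h1 _ (Finset.mem_filter.mpr ⟨hp, rfl⟩)
          _ (Finset.mem_filter.mpr ⟨hcT, rfl⟩)
        simpa using this
      · push_neg at hex
        exact ⟨0, fun p hp => absurd hp (hex p)⟩
    have hne : ∀ k : Fin 4, k ≠ 0 → c + k ≠ c := fun k hk =>
      (by decide : ∀ c k : Fin 4, k ≠ 0 → c + k ≠ c) c k hk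
    have notS : ∀ k : Fin 4, k ≠ 0 → (Sum.inl (i, c + k) : (Fin x × Fin 4) ⊕ (Fin y × Fin 6)) ∉ S :=
      fun k hk hmem => hne k hk (hc _ ((hmemT _).mpr hmem))
    exact no_path_cover hS
      (u1 := Sum.inl (i, c + 1)) (u2 := Sum.inl (i, c + 2)) (u3 := Sum.inl (i, c + 3))
      (BG_adj_ll.mpr ⟨rfl, Or.inr ((by decide : ∀ c : Fin 4, c + 2 = c + 1 + 1) c)⟩)
      (BG_adj_ll.mpr ⟨rfl, Or.inr ((by decide : ∀ c : Fin 4, c + 3 = c + 2 + 1) c)⟩)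
      (by simp only [ne_eq, Sum.inl.injEq, Prod.mk.injEq, not_and]
          exact fun _ h => (by decide : ∀ c : Fin 4, c + 1 ≠ c + 3) c h)
      (notS 1 (by decide)) (notS 2 (by decide)) (notS 3 (by decide))
  have hH : ∀ j : Fin y, 4 ≤ (T.filter (fun v => β v = Sum.inr j)).card := by
    intro j
    by_contra hlt
    have h3 : (T.filter (fun v => β v = Sum.inr j)).card ≤ 3 := by omega
    set F : Finset (Fin 6) := Finset.univ.filter
      (fun p => (Sum.inr (j, p) : (Fin x × Fin 4) ⊕ (Fin y × Fin 6)) ∈ T) with hF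
    have hFle : F.card ≤ 3 := by
      have hsub : F.image (fun p => (Sum.inr (j, p) : (Fin x × Fin 4) ⊕ (Fin y × Fin 6)))
          ⊆ T.filter (fun v => β v = Sum.inr j) := by
        intro v hv
        simp only [Finset.mem_image, hF, Finset.mem_filter, Finset.mem_univ, true_and] at hv
        obtain ⟨p, hp, rfl⟩ := hv
        exact Finset.mem_filter.mpr ⟨hp, rfl⟩
      calc F.card = (F.image _).card :=
            (Finset.card_image_of_injOn (fun p _ q _ h => by simpa using h)).symm
        _ ≤ _ := Finset.card_le_card hsub
        _ ≤ 3 := h3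
    have hcompl : 2 < (Finset.univ.filter
        (fun p : Fin 6 => (Sum.inr (j, p) : (Fin x × Fin 4) ⊕ (Fin y × Fin 6)) ∉ T)).card := by
      have hpn := Finset.card_filter_add_card_filter_not
        (s := (Finset.univ : Finset (Fin 6)))
        (p := fun p => (Sum.inr (j, p) : (Fin x × Fin 4) ⊕ (Fin y × Fin 6)) ∈ T)
      simp only [Finset.card_univ, Fintype.card_fin] at hpn
      rw [hF] at hFle
      omega
    obtain ⟨p1, p2, p3, m1, m2, m3, h12, h13, h23⟩ := Finset.two_lt_card_iff.mp hcompl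
    simp only [Finset.mem_filter, Finset.mem_univ, true_and] at m1 m2 m3
    have notS : ∀ p : Fin 6, (Sum.inr (j, p) : (Fin x × Fin 4) ⊕ (Fin y × Fin 6)) ∉ T →
        (Sum.inr (j, p) : (Fin x × Fin 4) ⊕ (Fin y × Fin 6)) ∉ S :=
      fun p hT hs => hT ((hmemT _).mpr hs)
    have hadj : ∀ p q : Fin 6, p ≠ q → q ≠ p + 3 →
        (BG x y).Adj (Sum.inr (j, p)) (Sum.inr (j, q)) := fun p q h1 h2 =>
      BG_adj_rr.mpr ⟨rfl, h1, h2,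
        fun h => h2 ((by decide : ∀ p q : Fin 6, p = q + 3 → q = p + 3) _ _ h)⟩
    have hne3 : ∀ u v : Fin 6, u ≠ v →
        (Sum.inr (j, u) : (Fin x × Fin 4) ⊕ (Fin y × Fin 6)) ≠ Sum.inr (j, v) := by
      intro u v huv h
      exact huv (by simpa using h)
    have hcancel : ∀ a b : Fin 6, a + 3 = b + 3 → a = b := by decide
    by_cases e12 : p2 = p1 + 3
    · -- path p1 p3 p2
      refine no_path_cover hS (hadj p1 p3 h13 (fun h => h23 (by rw [e12, ← h])))
        (hadj p3 p2 (Ne.symm h23) (fun h => h13 (hcancel _ _ (by rw [← e12, ← h]))))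
        (hne3 _ _ h12) (notS _ m1) (notS _ m3) (notS _ m2)
    · by_cases e13 : p3 = p1 + 3
      · -- path p1 p2 p3
        refine no_path_cover hS (hadj p1 p2 h12 e12)
          (hadj p2 p3 h23 (fun h => h12 (hcancel _ _ (by rw [← e13, ← h]))))
          (hne3 _ _ h13) (notS _ m1) (notS _ m2) (notS _ m3)
      · by_cases e23 : p3 = p2 + 3
        · -- path p2 p1 p3
          refine no_path_cover hS (hadj p2 p1 (Ne.symm h12) (fun h => h13 (by rw [h, ← e23])))
            (hadj p1 p3 h13 e13) (hne3 _ _ h23) (notS _ m2) (notS _ m1) (notS _ m3)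
        · refine no_path_cover hS (hadj p1 p2 h12 e12) (hadj p2 p3 h23 e23)
            (hne3 _ _ h13) (notS _ m1) (notS _ m2) (notS _ m3)
  rw [hcard, hfib]
  rw [Fintype.sum_sum_type]
  have b1 : (2 * x : ℕ) ≤ ∑ i : Fin x, (T.filter (fun v => β v = Sum.inl i)).card := by
    calc (2 * x : ℕ) = ∑ _i : Fin x, 2 := by simp [mul_comm]
      _ ≤ _ := Finset.sum_le_sum fun i _ => hC i
  have b2 : (4 * y : ℕ) ≤ ∑ j : Fin y, (T.filter (fun v => β v = Sum.inr j)).card := by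
    calc (4 * y : ℕ) = ∑ _j : Fin y, 4 := by simp [mul_comm]
      _ ≤ _ := Finset.sum_le_sum fun j _ => hH j
  omega

end Aux

theorem psi_three_sparse_tight (a b : ℕ) (hb : 1 ≤ b) (hba : b ≤ a) (hab : a ≤ 2 * b) :
    ∃ (N : ℕ) (G : SimpleGraph (Fin N)), 0 < N ∧
      (G.edgeSet.ncard : ℚ) / N = (a : ℚ) / b ∧
      (2 * (N : ℚ) + (G.edgeSet.ncard : ℚ)) / 6 ≤ (psi G 3 : ℚ) := by
  set x := 3 * (2 * b - a) with hx
  set y := 2 * (a - b) with hy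
  set N := 4 * x + 6 * y with hN
  have hNe : N = x * 4 + y * 6 := by omega
  set e : Fin N ≃ (Fin x × Fin 4) ⊕ (Fin y × Fin 6) :=
    (finCongr hNe).trans (finSumFinEquiv.symm.trans
      (Equiv.sumCongr finProdFinEquiv.symm finProdFinEquiv.symm)) with he
  set Gf : SimpleGraph (Fin N) := (BG x y).comap e.toEmbedding with hGf
  have hN12 : N = 12 * b := by omega
  have hEc : Gf.edgeSet.ncard = 12 * a := by
    have h1 : Gf.edgeSet.ncard = (BG x y).edgeSet.ncard := by
      rw [← Nat.card_coe_set_eq, ← Nat.card_coe_set_eq]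
      exact Nat.card_congr (Iso.comap e (BG x y)).mapEdgeSet
    have h2 : (BG x y).edgeSet.ncard = (BG x y).edgeFinset.card := by
      simp [Set.ncard_eq_toFinset_card', SimpleGraph.edgeFinset]
    rw [h1, h2, BG_edge_card]
    omega
  have hpsi : 4 * b + 2 * a ≤ psi Gf 3 := by
    have h1 : 2 * x + 4 * y ≤ psi Gf 3 :=
      psi_lb (fun S hS => psi_comap_lb e (BG x y) (fun S' hS' => BG_cover_lb x y hS') hS)
    omega
  have hNq : (N : ℚ) = 12 * b := by exact_mod_cast congrArg (Nat.cast (R := ℚ)) hN12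
  refine ⟨N, Gf, by omega, ?_, ?_⟩
  · rw [hEc, hNq]
    have hb0 : (b : ℚ) ≠ 0 := by positivity
    push_cast
    field_simp
  · rw [hEc]
    have h2 : ((4 * b + 2 * a : ℕ) : ℚ) ≤ (psi Gf 3 : ℚ) := by exact_mod_cast hpsi
    push_cast at h2 ⊢
    rw [hNq]
    linarith
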